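/- Suppose T_* = [T_inlet(t - ℓ/u_0) - I(t - ℓ/u_0)] e^{-kℓ/u_0} + I(t) holds for all t > ℓ/u_0, where I(t) = e^{-kt} ∫_0^t e^{kt'} k q(t') dt' with q continuous and T_inlet continuously differentiable. Then for t > ℓ/u_0, q satisfies the delay equation q(t) = T_* - T_inlet(t - ℓ/u_0) e^{-kℓ/u_0} - (1/k) T_inlet'(t - ℓ/u_0) e^{-kℓ/u_0} + q(t - ℓ/u_0) e^{-kℓ/u_0}. -/

import Mathlib

theorem stmt4 (u0 k ℓ Tstar : ℝ) (hu : 0 < u0) (hk : 0 < k) (hℓ : 0 < ℓ)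
    (Tinlet : ℝ → ℝ) (hTinlet : ContDiff ℝ 1 Tinlet)
    (q : ℝ → ℝ) (hq : Continuous q)
    (I : ℝ → ℝ)
    (hI : ∀ t, I t = Real.exp (-k * t) * ∫ s in (0:ℝ)..t, Real.exp (k * s) * (k * q s))
    (houtlet : ∀ t, ℓ / u0 < t →
      Tstar = (Tinlet (t - ℓ / u0) - I (t - ℓ / u0)) * Real.exp (-k * ℓ / u0) + I t) :
    ∀ t, ℓ / u0 < t →
      q t = Tstar - Tinlet (t - ℓ / u0) * Real.exp (-k * ℓ / u0)
        - (1 / k) * deriv Tinlet (t - ℓ / u0) * Real.exp (-k * ℓ / u0)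
        + q (t - ℓ / u0) * Real.exp (-k * ℓ / u0) := by
  intro t ht
  set τ := ℓ / u0 with hτ
  set c := Real.exp (-k * ℓ / u0) with hc
  -- continuity of integrand
  have hcont : Continuous (fun s => Real.exp (k * s) * (k * q s)) := by
    continuity
  set F : ℝ → ℝ := fun t => ∫ s in (0:ℝ)..t, Real.exp (k * s) * (k * q s) with hF
  have hFder : ∀ x : ℝ, HasDerivAt F (Real.exp (k * x) * (k * q x)) x := by
    intro x
    exact intervalIntegral.integral_hasDerivAt_right
      (hcont.intervalIntegrable _ _)
      (hcont.stronglyMeasurableAtFilter _ _)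
      hcont.continuousAt
  have hIder : ∀ x : ℝ, HasDerivAt I (-k * I x + k * q x) x := by
    intro x
    have h1 : HasDerivAt (fun y => Real.exp (-k * y)) (-k * Real.exp (-k * x)) x := by
      have := (hasDerivAt_id x).const_mul (-k)
      simpa [mul_comm] using (this.exp)
    have h2 := (h1.mul (hFder x))
    have heq : (fun y => Real.exp (-k * y) * F y) = I := by
      funext y; rw [hI y]
    rw [show (fun y => Real.exp (-k * y)) * F = I from heq] at h2
    refine h2.congr_deriv ?_
    have hx : Real.exp (-k * x) * Real.exp (k * x) = 1 := by
      rw [← Real.exp_add]; ring_nf; simp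
    have : I x = Real.exp (-k * x) * F x := hI x
    rw [this, ← mul_assoc (Real.exp (-k * x)) (Real.exp (k * x)), hx]
    ring
  -- differentiability of Tinlet
  have hTd : ∀ x : ℝ, HasDerivAt Tinlet (deriv Tinlet x) x := fun x =>
    ((hTinlet.differentiable one_ne_zero).differentiableAt).hasDerivAt
  -- function G vanishing near t
  set G : ℝ → ℝ := fun x => (Tinlet (x - τ) - I (x - τ)) * c + I x - Tstar with hG
  have hGder : HasDerivAt G
      ((deriv Tinlet (t - τ) - (-k * I (t - τ) + k * q (t - τ))) * c
        + (-k * I t + k * q t)) t := by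
    have hshift : HasDerivAt (fun x : ℝ => x - τ) 1 t := by
      simpa using (hasDerivAt_id t).sub_const τ
    have h1 : HasDerivAt (fun x => Tinlet (x - τ)) (deriv Tinlet (t - τ)) t := by
      have h := (hTd (t - τ)).comp t hshift; rw [mul_one] at h; exact h
    have h2 : HasDerivAt (fun x => I (x - τ)) (-k * I (t - τ) + k * q (t - τ)) t := by
      have h := (hIder (t - τ)).comp t hshift; rw [mul_one] at h; exact h
    exact (((h1.sub h2).mul_const c).add (hIder t)).sub_const Tstar
  have hG0 : G =ᶠ[nhds t] (fun _ => (0:ℝ)) := by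
    have : Set.Ioi τ ∈ nhds t := Ioi_mem_nhds ht
    filter_upwards [this] with x hx
    have := houtlet x hx
    simp only [hG]
    linarith
  have hzero : HasDerivAt G 0 t :=
    (hasDerivAt_const t (0:ℝ)).congr_of_eventuallyEq hG0
  have hD : (deriv Tinlet (t - τ) - (-k * I (t - τ) + k * q (t - τ))) * c
      + (-k * I t + k * q t) = 0 := hGder.unique hzero
  have houl := houtlet t ht
  have hkne : k ≠ 0 := ne_of_gt hk
  field_simp at hD ⊢
  nlinarith [hD, houl]
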